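/- Let M1 be the 6×6 rational matrix with rows (1,1,0,0,0,3/2), (1,2,0,0,0,0), (2/3,0,1,2/3,0,0), (0,1,3/2,2,5/2,0), (0,0,3,4,6,0), (0,0,0,0,0,1). Then M1 satisfies the polynomial identity M1^5 - 12·M1^4 + 37·M1^3 - 37·M1^2 + 12·M1 - I = 0. -/

import Mathlib

@[simp]
lemma cons_val_five' {α : Type*} {m : ℕ} (x : α) (u : Fin m.succ.succ.succ.succ.succ → α) :
    Matrix.vecCons x u 5 =
      Matrix.vecHead (Matrix.vecTail (Matrix.vecTail (Matrix.vecTail (Matrix.vecTail u)))) :=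
  rfl

set_option maxHeartbeats 3200000 in
lemma aux_mul_2 :
    (!![1, 1, 0, 0, 0, 3/2;
       1, 2, 0, 0, 0, 0;
       2/3, 0, 1, 2/3, 0, 0;
       0, 1, 3/2, 2, 5/2, 0;
       0, 0, 3, 4, 6, 0;
       0, 0, 0, 0, 0, 1] : Matrix (Fin 6) (Fin 6) ℚ) *
      !![1, 1, 0, 0, 0, 3/2;
         1, 2, 0, 0, 0, 0;
         2/3, 0, 1, 2/3, 0, 0;
         0, 1, 3/2, 2, 5/2, 0;
         0, 0, 3, 4, 6, 0;
         0, 0, 0, 0, 0, 1] =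
      !![2, 3, 0, 0, 0, 3;
         3, 5, 0, 0, 0, 3/2;
         4/3, 4/3, 2, 2, 5/3, 1;
         2, 4, 12, 15, 20, 0;
         2, 4, 27, 34, 46, 0;
         0, 0, 0, 0, 0, 1] := by
  ext i j
  fin_cases i <;> fin_cases j <;>
    norm_num [Matrix.mul_apply, Fin.sum_univ_six, Matrix.vecHead, Matrix.vecTail, Matrix.cons_val_two, Matrix.cons_val_three, Matrix.cons_val_four]

set_option maxHeartbeats 3200000 in
lemma aux_mul_3 :
    (!![2, 3, 0, 0, 0, 3;
       3, 5, 0, 0, 0, 3/2;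
       4/3, 4/3, 2, 2, 5/3, 1;
       2, 4, 12, 15, 20, 0;
       2, 4, 27, 34, 46, 0;
       0, 0, 0, 0, 0, 1] : Matrix (Fin 6) (Fin 6) ℚ) *
      !![1, 1, 0, 0, 0, 3/2;
         1, 2, 0, 0, 0, 0;
         2/3, 0, 1, 2/3, 0, 0;
         0, 1, 3/2, 2, 5/2, 0;
         0, 0, 3, 4, 6, 0;
         0, 0, 0, 0, 0, 1] =
      !![5, 8, 0, 0, 0, 6;
         8, 13, 0, 0, 0, 6;
         4, 6, 10, 12, 15, 3;
         14, 25, 189/2, 118, 315/2, 3;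
         24, 44, 216, 270, 361, 3;
         0, 0, 0, 0, 0, 1] := by
  ext i j
  fin_cases i <;> fin_cases j <;>
    norm_num [Matrix.mul_apply, Fin.sum_univ_six, Matrix.vecHead, Matrix.vecTail, Matrix.cons_val_two, Matrix.cons_val_three, Matrix.cons_val_four]

set_option maxHeartbeats 3200000 in
lemma aux_mul_4 :
    (!![5, 8, 0, 0, 0, 6;
       8, 13, 0, 0, 0, 6;
       4, 6, 10, 12, 15, 3;
       14, 25, 189/2, 118, 315/2, 3;
       24, 44, 216, 270, 361, 3;
       0, 0, 0, 0, 0, 1] : Matrix (Fin 6) (Fin 6) ℚ) *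
      !![1, 1, 0, 0, 0, 3/2;
         1, 2, 0, 0, 0, 0;
         2/3, 0, 1, 2/3, 0, 0;
         0, 1, 3/2, 2, 5/2, 0;
         0, 0, 3, 4, 6, 0;
         0, 0, 0, 0, 0, 1] =
      !![13, 21, 0, 0, 0, 27/2;
         21, 34, 0, 0, 0, 18;
         50/3, 28, 73, 272/3, 120, 9;
         102, 182, 744, 929, 1240, 24;
         212, 382, 1704, 2128, 2841, 39;
         0, 0, 0, 0, 0, 1] := by
  ext i j
  fin_cases i <;> fin_cases j <;>
    norm_num [Matrix.mul_apply, Fin.sum_univ_six, Matrix.vecHead, Matrix.vecTail, Matrix.cons_val_two, Matrix.cons_val_three, Matrix.cons_val_four]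

set_option maxHeartbeats 3200000 in
lemma aux_mul_5 :
    (!![13, 21, 0, 0, 0, 27/2;
       21, 34, 0, 0, 0, 18;
       50/3, 28, 73, 272/3, 120, 9;
       102, 182, 744, 929, 1240, 24;
       212, 382, 1704, 2128, 2841, 39;
       0, 0, 0, 0, 0, 1] : Matrix (Fin 6) (Fin 6) ℚ) *
      !![1, 1, 0, 0, 0, 3/2;
         1, 2, 0, 0, 0, 0;
         2/3, 0, 1, 2/3, 0, 0;
         0, 1, 3/2, 2, 5/2, 0;
         0, 0, 3, 4, 6, 0;
         0, 0, 0, 0, 0, 1] =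
      !![34, 55, 0, 0, 0, 33;
         55, 89, 0, 0, 0, 99/2;
         280/3, 490/3, 569, 710, 2840/3, 34;
         780, 1395, 11715/2, 7314, 19525/2, 177;
         1730, 3104, 13419, 16756, 22366, 357;
         0, 0, 0, 0, 0, 1] := by
  ext i j
  fin_cases i <;> fin_cases j <;>
    norm_num [Matrix.mul_apply, Fin.sum_univ_six, Matrix.vecHead, Matrix.vecTail, Matrix.cons_val_two, Matrix.cons_val_three, Matrix.cons_val_four]

lemma aux_one : (!![1, 0, 0, 0, 0, 0;
       0, 1, 0, 0, 0, 0;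
       0, 0, 1, 0, 0, 0;
       0, 0, 0, 1, 0, 0;
       0, 0, 0, 0, 1, 0;
       0, 0, 0, 0, 0, 1] : Matrix (Fin 6) (Fin 6) ℚ) = 1 := by
  ext i j
  fin_cases i <;> fin_cases j <;>
    norm_num [Matrix.one_apply, Matrix.vecHead, Matrix.vecTail, Fin.ext_iff]

set_option maxHeartbeats 3200000 in
lemma aux_final :
    (!![34, 55, 0, 0, 0, 33;
       55, 89, 0, 0, 0, 99/2;
       280/3, 490/3, 569, 710, 2840/3, 34;
       780, 1395, 11715/2, 7314, 19525/2, 177;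
       1730, 3104, 13419, 16756, 22366, 357;
       0, 0, 0, 0, 0, 1] : Matrix (Fin 6) (Fin 6) ℚ)
    - (12:ℚ) • !![13, 21, 0, 0, 0, 27/2;
               21, 34, 0, 0, 0, 18;
               50/3, 28, 73, 272/3, 120, 9;
               102, 182, 744, 929, 1240, 24;
               212, 382, 1704, 2128, 2841, 39;
               0, 0, 0, 0, 0, 1]
    + (37:ℚ) • !![5, 8, 0, 0, 0, 6;
               8, 13, 0, 0, 0, 6;
               4, 6, 10, 12, 15, 3;
               14, 25, 189/2, 118, 315/2, 3;
               24, 44, 216, 270, 361, 3;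
               0, 0, 0, 0, 0, 1]
    - (37:ℚ) • !![2, 3, 0, 0, 0, 3;
               3, 5, 0, 0, 0, 3/2;
               4/3, 4/3, 2, 2, 5/3, 1;
               2, 4, 12, 15, 20, 0;
               2, 4, 27, 34, 46, 0;
               0, 0, 0, 0, 0, 1]
    + (12:ℚ) • !![1, 1, 0, 0, 0, 3/2;
               1, 2, 0, 0, 0, 0;
               2/3, 0, 1, 2/3, 0, 0;
               0, 1, 3/2, 2, 5/2, 0;
               0, 0, 3, 4, 6, 0;
               0, 0, 0, 0, 0, 1]
    - 1 = 0 := by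
  rw [sub_eq_zero, ← aux_one]
  norm_num [Matrix.of_add_of, Matrix.of_sub_of, Matrix.smul_of]

set_option maxHeartbeats 3200000 in
theorem stmt_5 :
    let M1 : Matrix (Fin 6) (Fin 6) ℚ :=
      !![1, 1, 0, 0, 0, 3/2;
         1, 2, 0, 0, 0, 0;
         2/3, 0, 1, 2/3, 0, 0;
         0, 1, 3/2, 2, 5/2, 0;
         0, 0, 3, 4, 6, 0;
         0, 0, 0, 0, 0, 1]
    M1^5 - 12 * M1^4 + 37 * M1^3 - 37 * M1^2 + 12 * M1 - 1 = 0 := by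
  intro M1
  show M1^5 - 12 * M1^4 + 37 * M1^3 - 37 * M1^2 + 12 * M1 - 1 = 0
  have hM : M1 = !![1, 1, 0, 0, 0, 3/2;
         1, 2, 0, 0, 0, 0;
         2/3, 0, 1, 2/3, 0, 0;
         0, 1, 3/2, 2, 5/2, 0;
         0, 0, 3, 4, 6, 0;
         0, 0, 0, 0, 0, 1] := rfl
  have h2 : M1^2 =
      !![2, 3, 0, 0, 0, 3;
         3, 5, 0, 0, 0, 3/2;
         4/3, 4/3, 2, 2, 5/3, 1;
         2, 4, 12, 15, 20, 0;
         2, 4, 27, 34, 46, 0;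
         0, 0, 0, 0, 0, 1] := by rw [show M1^2 = M1 * M1 from pow_two M1, hM]; exact aux_mul_2
  have h3 : M1^3 =
      !![5, 8, 0, 0, 0, 6;
         8, 13, 0, 0, 0, 6;
         4, 6, 10, 12, 15, 3;
         14, 25, 189/2, 118, 315/2, 3;
         24, 44, 216, 270, 361, 3;
         0, 0, 0, 0, 0, 1] := by rw [show M1^3 = M1^2 * M1 from pow_succ M1 2, h2, hM]; exact aux_mul_3
  have h4 : M1^4 =
      !![13, 21, 0, 0, 0, 27/2;
         21, 34, 0, 0, 0, 18;
         50/3, 28, 73, 272/3, 120, 9;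
         102, 182, 744, 929, 1240, 24;
         212, 382, 1704, 2128, 2841, 39;
         0, 0, 0, 0, 0, 1] := by rw [show M1^4 = M1^3 * M1 from pow_succ M1 3, h3, hM]; exact aux_mul_4
  have h5 : M1^5 =
      !![34, 55, 0, 0, 0, 33;
         55, 89, 0, 0, 0, 99/2;
         280/3, 490/3, 569, 710, 2840/3, 34;
         780, 1395, 11715/2, 7314, 19525/2, 177;
         1730, 3104, 13419, 16756, 22366, 357;
         0, 0, 0, 0, 0, 1] := by rw [show M1^5 = M1^4 * M1 from pow_succ M1 4, h4, hM]; exact aux_mul_5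
  have key : ∀ (c : ℚ) (A : Matrix (Fin 6) (Fin 6) ℚ),
      Matrix.diagonal (fun _ => c) * A = c • A := by
    intro c A
    ext i j
    simp [Matrix.diagonal_mul]
  rw [h5, h4, h3, h2, ← Matrix.diagonal_ofNat (n := Fin 6) 12,
    ← Matrix.diagonal_ofNat (n := Fin 6) 37, key, key, key, key, hM]
  exact aux_final
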